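/- Consider a 0-1 knapsack instance with items sorted by non-increasing efficiency and with Σ_{i=1}^n w_i > W, and let Ĩ = {1, ..., k} be the greedy prefix solution. Then there exists an optimal solution S* ⊆ {1, ..., n} such that the symmetric difference Ĩ Δ S* has cardinality at most 2·w_max. -/
import Mathlib

open Finset

/-- prefix sum of a list -/
def preS (l : List ℕ) (i : ℕ) : ℕ := (l.take i).sum

lemma list_length_le_sum (l : List ℕ) (h : ∀ x ∈ l, 1 ≤ x) : l.length ≤ l.sum := by
  induction l with
  | nil => simp
  | cons a t ih =>
    have h1 := h a (by simp)
    have h2 := ih (fun x hx => h x (by simp [hx]))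
    simp only [List.length_cons, List.sum_cons]
    omega

lemma preS_mono (l : List ℕ) {i i' : ℕ} (h : i ≤ i') : preS l i ≤ preS l i' := by
  unfold preS
  rw [show i' = i + (i' - i) by omega, List.take_add, List.sum_append]
  exact Nat.le_add_right _ _

lemma preS_zero (l : List ℕ) : preS l 0 = 0 := by simp [preS]

lemma preS_length (l : List ℕ) : preS l l.length = l.sum := by simp [preS]

lemma preS_succ (l : List ℕ) {i : ℕ} (h : i < l.length) :
    preS l (i + 1) = preS l i + l[i] := by
  simp [preS, List.sum_take_succ l i h]

lemma knapsack_core (m s : ℕ) (hm : 1 ≤ m) (as bs : List ℕ)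
    (ha : ∀ x ∈ as, 1 ≤ x ∧ x ≤ m) (hb : ∀ x ∈ bs, 1 ≤ x ∧ x ≤ m)
    (hAB : as.sum ≤ bs.sum + s)
    (hBA : bs.sum + 1 ≤ as.sum + m)
    (H1 : ∀ i, 1 ≤ i → i ≤ as.length → ∀ j, j ≤ bs.length →
      ¬(preS bs j ≤ preS as i ∧ preS as i ≤ preS bs j + s))
    (H2 : ∀ i i' j j', i ≤ i' → i' ≤ as.length → j ≤ j' → j' ≤ bs.length →
      (i ≠ i' ∨ j ≠ j') →
      preS as i + preS bs j' ≠ preS as i' + preS bs j) :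
    as.length + bs.length + 2 ≤ 2 * m := by
  have hQge : ∀ j, j ≤ bs.length → j ≤ preS bs j := by
    intro j hj
    have := list_length_le_sum (bs.take j) (fun x hx => (hb x (List.mem_of_mem_take hx)).1)
    rwa [List.length_take, min_eq_left hj] at this
  by_cases hc : bs.sum ≤ as.sum
  · rcases Nat.eq_zero_or_pos as.length with hp0 | hp1
    · have has : as = [] := List.length_eq_zero_iff.mp hp0
      subst has
      have hbs0 : bs.sum = 0 := by simpa using hc
      have := list_length_le_sum bs (fun x hx => (hb x hx).1)
      simp only [List.length_nil]
      omega
    · refine absurd ⟨?_, ?_⟩ (H1 as.length hp1 le_rfl bs.length le_rfl) <;>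
        rw [preS_length, preS_length] <;> omega
  · push_neg at hc
    -- A side
    have hpA : as.length ≤ m - 1 - s := by
      have key : ∀ i ∈ Finset.Icc 1 as.length,
          (fun i => preS as i - preS bs (Nat.findGreatest (fun j => preS bs j ≤ preS as i) bs.length)) i
            ∈ Finset.Icc (s+1) (m-1) := by
        intro i hi
        rw [Finset.mem_Icc] at hi
        simp only
        set jf := Nat.findGreatest (fun j => preS bs j ≤ preS as i) bs.length with hjf
        have hQj : preS bs jf ≤ preS as i := by
          rw [hjf]
          exact Nat.findGreatest_spec (P := fun j => preS bs j ≤ preS as i)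
            (Nat.zero_le _) (by simp [preS_zero])
        have hjq : jf ≤ bs.length := Nat.findGreatest_le _
        have hPile : preS as i ≤ as.sum := by rw [← preS_length]; exact preS_mono as hi.2
        have hjlt : jf < bs.length := by
          rcases Nat.lt_or_ge jf bs.length with h | h
          · exact h
          · exfalso
            have hje : jf = bs.length := le_antisymm hjq h
            rw [hje, preS_length] at hQj; omega
        have hnext : ¬ preS bs (jf + 1) ≤ preS as i := by
          rw [hjf]
          exact Nat.findGreatest_is_greatest (P := fun j => preS bs j ≤ preS as i)
            (by rw [← hjf]; exact Nat.lt_succ_self jf) hjlt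
        have hxe := preS_succ bs hjlt
        have hxm := (hb _ (List.getElem_mem hjlt)).2
        have glow : s + 1 ≤ preS as i - preS bs jf := by
          by_contra hcon
          exact H1 i hi.1 hi.2 jf (le_of_lt hjlt) ⟨hQj, by omega⟩
        rw [Finset.mem_Icc]
        omega
      have inj : Set.InjOn
          (fun i => preS as i - preS bs (Nat.findGreatest (fun j => preS bs j ≤ preS as i) bs.length))
          ↑(Finset.Icc 1 as.length) := by
        have main : ∀ a a', 1 ≤ a → a ≤ as.length → a' ≤ as.length → a < a' →
            preS as a - preS bs (Nat.findGreatest (fun j => preS bs j ≤ preS as a) bs.length) =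
            preS as a' - preS bs (Nat.findGreatest (fun j => preS bs j ≤ preS as a') bs.length) →
            False := by
          intro a a' ha1 hap hap' haa heq2
          set ja := Nat.findGreatest (fun j => preS bs j ≤ preS as a) bs.length with hja
          set ja' := Nat.findGreatest (fun j => preS bs j ≤ preS as a') bs.length with hja'
          have hQa : preS bs ja ≤ preS as a := by
            rw [hja]
            exact Nat.findGreatest_spec (P := fun j => preS bs j ≤ preS as a)
              (Nat.zero_le _) (by simp [preS_zero])
          have hQa' : preS bs ja' ≤ preS as a' := by
            rw [hja']
            exact Nat.findGreatest_spec (P := fun j => preS bs j ≤ preS as a')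
              (Nat.zero_le _) (by simp [preS_zero])
          have hjaq : ja ≤ bs.length := Nat.findGreatest_le _
          have hjaq' : ja' ≤ bs.length := Nat.findGreatest_le _
          have hmono : ja ≤ ja' := by
            rw [hja']
            exact Nat.le_findGreatest hjaq (le_trans hQa (preS_mono as (le_of_lt haa)))
          exact H2 a a' ja ja' (le_of_lt haa) hap' hmono hjaq' (Or.inl (Nat.ne_of_lt haa))
            (by omega)
        intro i hi i' hi' heq
        simp only [Finset.coe_Icc, Set.mem_Icc] at hi hi'
        by_contra hne
        rcases Nat.lt_or_ge i i' with h | h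
        · exact main i i' hi.1 hi.2 hi'.2 h heq
        · exact main i' i hi'.1 hi'.2 hi.2 (by omega) heq.symm
      have := Finset.card_le_card_of_injOn _ key inj
      rw [Nat.card_Icc, Nat.card_Icc] at this
      omega
    -- B side
    have hqB : bs.length ≤ m - 1 := by
      have key : ∀ j ∈ Finset.Icc 1 bs.length,
          (fun j => preS bs j - preS as (Nat.findGreatest (fun i => preS as i ≤ preS bs j) as.length)) j
            ∈ Finset.Icc 1 (m-1) := by
        intro j hj
        rw [Finset.mem_Icc] at hj
        simp only
        set ifn := Nat.findGreatest (fun i => preS as i ≤ preS bs j) as.length with hifn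
        have hPi : preS as ifn ≤ preS bs j := by
          rw [hifn]
          exact Nat.findGreatest_spec (P := fun i => preS as i ≤ preS bs j)
            (Nat.zero_le _) (by simp [preS_zero])
        have hip : ifn ≤ as.length := Nat.findGreatest_le _
        have hQjq : preS bs j ≤ bs.sum := by rw [← preS_length]; exact preS_mono bs hj.2
        have dlow : 1 ≤ preS bs j - preS as ifn := by
          rcases Nat.eq_or_lt_of_le hPi with heq | hlt
          · exfalso
            rcases Nat.eq_zero_or_pos ifn with h0 | h1
            · rw [h0, preS_zero] at heq
              have := hQge j hj.2
              omega
            · exact H1 ifn h1 hip j hj.2 ⟨le_of_eq heq.symm, by omega⟩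
          · omega
        have dhigh : preS bs j - preS as ifn ≤ m - 1 := by
          rcases Nat.lt_or_ge ifn as.length with hlt | hge
          · have hnext : ¬ preS as (ifn + 1) ≤ preS bs j := by
              rw [hifn]
              exact Nat.findGreatest_is_greatest (P := fun i => preS as i ≤ preS bs j)
                (by rw [← hifn]; exact Nat.lt_succ_self ifn) hlt
            have hxe := preS_succ as hlt
            have hxm := (ha _ (List.getElem_mem hlt)).2
            omega
          · have hie : ifn = as.length := le_antisymm hip hge
            rw [hie, preS_length]
            omega
        rw [Finset.mem_Icc]
        omega
      have inj : Set.InjOn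
          (fun j => preS bs j - preS as (Nat.findGreatest (fun i => preS as i ≤ preS bs j) as.length))
          ↑(Finset.Icc 1 bs.length) := by
        have main : ∀ b b', 1 ≤ b → b ≤ bs.length → b' ≤ bs.length → b < b' →
            preS bs b - preS as (Nat.findGreatest (fun i => preS as i ≤ preS bs b) as.length) =
            preS bs b' - preS as (Nat.findGreatest (fun i => preS as i ≤ preS bs b') as.length) →
            False := by
          intro b b' hb1 hbq hbq' hbb heq2
          set ib := Nat.findGreatest (fun i => preS as i ≤ preS bs b) as.length with hib
          set ib' := Nat.findGreatest (fun i => preS as i ≤ preS bs b') as.length with hib'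
          have hPb : preS as ib ≤ preS bs b := by
            rw [hib]
            exact Nat.findGreatest_spec (P := fun i => preS as i ≤ preS bs b)
              (Nat.zero_le _) (by simp [preS_zero])
          have hPb' : preS as ib' ≤ preS bs b' := by
            rw [hib']
            exact Nat.findGreatest_spec (P := fun i => preS as i ≤ preS bs b')
              (Nat.zero_le _) (by simp [preS_zero])
          have hibp : ib ≤ as.length := Nat.findGreatest_le _
          have hibp' : ib' ≤ as.length := Nat.findGreatest_le _
          have hmono : ib ≤ ib' := by
            rw [hib']
            exact Nat.le_findGreatest hibp (le_trans hPb (preS_mono bs (le_of_lt hbb)))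
          exact H2 ib ib' b b' hmono hibp' (le_of_lt hbb) hbq' (Or.inr (Nat.ne_of_lt hbb))
            (by omega)
        intro j hj j' hj' heq
        simp only [Finset.coe_Icc, Set.mem_Icc] at hj hj'
        by_contra hne
        rcases Nat.lt_or_ge j j' with h | h
        · exact main j j' hj.1 hj.2 hj'.2 h heq
        · exact main j' j hj'.1 hj'.2 hj.2 (by omega) heq.symm
      have := Finset.card_le_card_of_injOn _ key inj
      rw [Nat.card_Icc, Nat.card_Icc] at this
      omega
    omega

lemma block_subset {α : Type*} [DecidableEq α] (A : Finset α) (f : α → ℕ) (i i' : ℕ)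
    (hii : i ≤ i') :
    ∃ A', A' ⊆ A ∧ (∑ x ∈ A', f x) + preS (A.toList.map f) i = preS (A.toList.map f) i' ∧
      (i < i' → i' ≤ A.card → A'.Nonempty) := by
  refine ⟨((A.toList.drop i).take (i' - i)).toFinset, ?_, ?_, ?_⟩
  · intro x hx
    rw [List.mem_toFinset] at hx
    exact Finset.mem_toList.mp (((List.take_sublist _ _).trans (List.drop_sublist _ _)).subset hx)
  · have hnd : ((A.toList.drop i).take (i' - i)).Nodup :=
      ((List.take_sublist _ _).trans (List.drop_sublist _ _)).nodup A.nodup_toList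
    rw [List.sum_toFinset f hnd]
    have key : ((A.toList.map f).take (i + (i' - i))).sum
        = ((A.toList.map f).take i).sum + (((A.toList.map f).drop i).take (i' - i)).sum := by
      rw [List.take_add, List.sum_append]
    rw [show i + (i' - i) = i' by omega] at key
    unfold preS
    simp only [← List.map_take, ← List.map_drop] at key ⊢
    omega
  · intro h1 h2
    have hlen : 0 < ((A.toList.drop i).take (i' - i)).length := by
      rw [List.length_take, List.length_drop, Finset.length_toList]
      omega
    obtain ⟨x, hx⟩ := List.exists_mem_of_length_pos hlen
    exact ⟨x, List.mem_toFinset.mpr hx⟩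


open Finset in
/-- **Proximity lemma (Polak–Rohwedder–Węgrzycki).**
For a 0-1 knapsack instance with items sorted by non-increasing efficiency
(`p i / w i ≥ p (i+1) / w (i+1)`) whose total weight exceeds the capacity `W`,
if `Ĩ = {1, …, k}` is the maximal greedy prefix solution, then some optimal
solution `S*` satisfies `|Ĩ Δ S*| ≤ 2 ⬝ w_max`. -/
theorem knapsack_proximity
    (n : ℕ) (w p : Fin n → ℕ) (W wmax : ℕ) (hW : 1 ≤ W)
    (hw : ∀ i, 1 ≤ w i ∧ w i ≤ wmax) (hp : ∀ i, 1 ≤ p i)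
    (hsorted : ∀ i : Fin n, ∀ h : (i : ℕ) + 1 < n,
      p i * w ⟨(i : ℕ) + 1, h⟩ ≥ p ⟨(i : ℕ) + 1, h⟩ * w i)
    (htotal : ∑ i, w i > W)
    (k : ℕ) (hkW : ∑ i ∈ univ.filter (fun i : Fin n => (i : ℕ) < k), w i ≤ W)
    (hkmax : ∀ k' : ℕ, k' ≤ n →
      ∑ i ∈ univ.filter (fun i : Fin n => (i : ℕ) < k'), w i ≤ W → k' ≤ k) :
    ∃ S : Finset (Fin n),
      (∑ i ∈ S, w i ≤ W) ∧
      (∀ T : Finset (Fin n), ∑ i ∈ T, w i ≤ W → ∑ i ∈ T, p i ≤ ∑ i ∈ S, p i) ∧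
      (symmDiff (univ.filter (fun i : Fin n => (i : ℕ) < k)) S).card ≤ 2 * wmax := by
  classical
  set Itil : Finset (Fin n) := univ.filter (fun i : Fin n => (i : ℕ) < k) with hItil
  -- basic facts
  have hn : 0 < n := by
    rcases Nat.eq_zero_or_pos n with h0 | h1
    · exfalso; subst h0; simp at htotal
    · exact h1
  have hwmax : 1 ≤ wmax := le_trans (hw ⟨0, hn⟩).1 (hw ⟨0, hn⟩).2
  have hkn : k < n := by
    by_contra h
    push_neg at h
    have he : Itil = univ := by
      ext i
      simp only [hItil, Finset.mem_filter, Finset.mem_univ, true_and, iff_true]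
      have := i.isLt; omega
    rw [he] at hkW
    omega
  set ik : Fin n := ⟨k, hkn⟩ with hik
  have hwIk : W < ∑ i ∈ Itil, w i + w ik := by
    have h1 : ¬ (∑ i ∈ univ.filter (fun i : Fin n => (i : ℕ) < k + 1), w i ≤ W) := by
      intro hc
      have := hkmax (k + 1) hkn hc
      omega
    have h2 : univ.filter (fun i : Fin n => (i : ℕ) < k + 1) = insert ik Itil := by
      ext i
      simp only [Finset.mem_filter, Finset.mem_univ, true_and, Finset.mem_insert, hItil,
        hik, Fin.ext_iff]
      omega
    rw [h2, Finset.sum_insert (by simp [hItil, hik])] at h1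
    omega
  -- efficiency monotonicity
  have mono : ∀ i j : Fin n, i ≤ j → p j * w i ≤ p i * w j := by
    have mono_aux : ∀ d : ℕ, ∀ i j : Fin n, (j : ℕ) = (i : ℕ) + d →
        p j * w i ≤ p i * w j := by
      intro d
      induction d with
      | zero =>
        intro i j hij
        have : i = j := Fin.ext (by omega)
        subst this; exact le_rfl
      | succ d ih =>
        intro i j hij
        have hdn : (i : ℕ) + d < n := by have := j.isLt; omega
        set mid : Fin n := ⟨(i : ℕ) + d, hdn⟩ with hmid
        have h1 : p mid * w i ≤ p i * w mid := ih i mid rfl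
        have hdn2 : (mid : ℕ) + 1 < n := by have := j.isLt; simp [hmid]; omega
        have h2 : p j * w mid ≤ p mid * w j := by
          have hs := hsorted mid hdn2
          have hj : j = ⟨(mid : ℕ) + 1, hdn2⟩ := Fin.ext (by simp [hmid]; omega)
          rw [hj]
          exact hs
        have hpmid : 1 ≤ p mid := hp mid
        have chain : p mid * (p j * w i) ≤ p mid * (p i * w j) := by
          calc p mid * (p j * w i) = p j * (p mid * w i) := by ring
          _ ≤ p j * (p i * w mid) := Nat.mul_le_mul_left _ h1
          _ = p i * (p j * w mid) := by ring
          _ ≤ p i * (p mid * w j) := Nat.mul_le_mul_left _ h2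
          _ = p mid * (p i * w j) := by ring
        exact Nat.le_of_mul_le_mul_left chain hpmid
    intro i j hij
    exact mono_aux ((j : ℕ) - (i : ℕ)) i j (by have := Fin.le_def.mp hij; omega)
  -- choose an optimal solution minimizing the symmetric difference
  set F : Finset (Finset (Fin n)) :=
    univ.filter (fun S => ∑ i ∈ S, w i ≤ W) with hF
  obtain ⟨S₀, hS₀F, hS₀max⟩ := F.exists_max_image (fun S => ∑ i ∈ S, p i)
    ⟨∅, by simp [hF]⟩
  set O : Finset (Finset (Fin n)) :=
    F.filter (fun S => ∑ i ∈ S₀, p i ≤ ∑ i ∈ S, p i) with hO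
  obtain ⟨S, hSO, hSmin⟩ := O.exists_min_image (fun S => (symmDiff Itil S).card)
    ⟨S₀, by rw [hO, Finset.mem_filter]; exact ⟨hS₀F, le_rfl⟩⟩
  rw [hO, Finset.mem_filter, hF, Finset.mem_filter] at hSO
  have hSfeas : ∑ i ∈ S, w i ≤ W := hSO.1.2
  have hSprofit0 : ∑ i ∈ S₀, p i ≤ ∑ i ∈ S, p i := hSO.2
  have hSopt : ∀ T : Finset (Fin n), ∑ i ∈ T, w i ≤ W → ∑ i ∈ T, p i ≤ ∑ i ∈ S, p i :=
    fun T hT => le_trans (hS₀max T (by rw [hF, Finset.mem_filter]; exact ⟨Finset.mem_univ _, hT⟩))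
      hSprofit0
  refine ⟨S, hSfeas, hSopt, ?_⟩
  set A : Finset (Fin n) := Itil \ S with hA
  set B : Finset (Fin n) := S \ Itil with hB
  have hcardsym : (symmDiff Itil S).card = A.card + B.card := by
    rw [symmDiff_def]
    exact Finset.card_union_of_disjoint disjoint_sdiff_sdiff
  -- membership facts
  have hAI : ∀ x ∈ A, (x : ℕ) < k := by
    intro x hx
    have := (Finset.mem_sdiff.mp hx).1
    rw [hItil] at this
    exact (Finset.mem_filter.mp this).2
  have hBk : ∀ x ∈ B, k ≤ (x : ℕ) := by
    intro x hx
    have := (Finset.mem_sdiff.mp hx).2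
    rw [hItil] at this
    simp only [Finset.mem_filter, Finset.mem_univ, true_and] at this
    omega
  -- no-exchange property
  have noex : ∀ A', A' ⊆ A → ∀ B', B' ⊆ B → (A'.Nonempty ∨ B'.Nonempty) →
      ¬(∑ x ∈ B', w x ≤ ∑ x ∈ A', w x ∧
        ∑ x ∈ A', w x + ∑ i ∈ S, w i ≤ ∑ x ∈ B', w x + W) := by
    rintro A' hA' B' hB' hne ⟨h1, h2⟩
    have hA'I : ∀ x ∈ A', x ∈ Itil := fun x hx => (Finset.mem_sdiff.mp (hA' hx)).1
    have hA'S : ∀ x ∈ A', x ∉ S := fun x hx => (Finset.mem_sdiff.mp (hA' hx)).2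
    have hB'S : ∀ x ∈ B', x ∈ S := fun x hx => (Finset.mem_sdiff.mp (hB' hx)).1
    have hB'I : ∀ x ∈ B', x ∉ Itil := fun x hx => (Finset.mem_sdiff.mp (hB' hx)).2
    set S' : Finset (Fin n) := (S \ B') ∪ A' with hS'
    have hdisj : Disjoint (S \ B') A' := by
      rw [Finset.disjoint_right]
      intro x hx hxS
      exact hA'S x hx (Finset.mem_sdiff.mp hxS).1
    have hB'sub : B' ⊆ S := fun x hx => hB'S x hx
    have hsum_w : ∑ x ∈ S', w x + ∑ x ∈ B', w x = ∑ i ∈ S, w i + ∑ x ∈ A', w x := by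
      rw [hS', Finset.sum_union hdisj]
      have := Finset.sum_sdiff (f := w) hB'sub
      omega
    have hsum_p : ∑ x ∈ S', p x + ∑ x ∈ B', p x = ∑ i ∈ S, p i + ∑ x ∈ A', p x := by
      rw [hS', Finset.sum_union hdisj]
      have := Finset.sum_sdiff (f := p) hB'sub
      omega
    have hS'feas : ∑ x ∈ S', w x ≤ W := by omega
    -- profit comparison via the pivot item ik
    have hAeff : ∀ a ∈ A', p ik * w a ≤ p a * w ik := by
      intro a haA
      exact mono a ik (by rw [Fin.le_def]; have := hAI a (hA' haA); simp [hik]; omega)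
    have hBeff : ∀ b ∈ B', p b * w ik ≤ p ik * w b := by
      intro b hbB
      exact mono ik b (by rw [Fin.le_def]; have := hBk b (hB' hbB); simp [hik]; omega)
    have hprofAB : ∑ x ∈ B', p x ≤ ∑ x ∈ A', p x := by
      have e1 : (∑ x ∈ B', p x) * w ik ≤ p ik * ∑ x ∈ B', w x := by
        rw [Finset.sum_mul, Finset.mul_sum]
        exact Finset.sum_le_sum hBeff
      have e2 : p ik * ∑ x ∈ B', w x ≤ p ik * ∑ x ∈ A', w x :=
        Nat.mul_le_mul_left _ h1
      have e3 : p ik * ∑ x ∈ A', w x ≤ (∑ x ∈ A', p x) * w ik := by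
        rw [Finset.mul_sum, Finset.sum_mul]
        exact Finset.sum_le_sum hAeff
      have : (∑ x ∈ B', p x) * w ik ≤ (∑ x ∈ A', p x) * w ik := le_trans e1 (le_trans e2 e3)
      have hwik : 0 < w ik := (hw ik).1
      exact Nat.le_of_mul_le_mul_right this hwik
    have hS'prof : ∑ i ∈ S, p i ≤ ∑ x ∈ S', p x := by omega
    have hS'O : S' ∈ O := by
      rw [hO, Finset.mem_filter, hF, Finset.mem_filter]
      exact ⟨⟨Finset.mem_univ _, hS'feas⟩, le_trans hSprofit0 hS'prof⟩
    -- the symmetric difference strictly decreases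
    have hmemS' : ∀ x, x ∈ S' ↔ (x ∈ S ∧ x ∉ B') ∨ x ∈ A' := by
      intro x
      rw [hS', Finset.mem_union, Finset.mem_sdiff]
    have hZsub : symmDiff Itil S' ⊆ symmDiff Itil S := by
      intro x hx
      rw [Finset.mem_symmDiff] at hx ⊢
      rcases hx with ⟨hxI, hxS'⟩ | ⟨hxS', hxI⟩
      · left
        refine ⟨hxI, ?_⟩
        intro hxS
        by_cases hxB : x ∈ B'
        · exact hB'I x hxB hxI
        · exact hxS' ((hmemS' x).mpr (Or.inl ⟨hxS, hxB⟩))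
      · right
        rcases (hmemS' x).mp hxS' with ⟨hxS, _⟩ | hxA
        · exact ⟨hxS, hxI⟩
        · exact absurd (hA'I x hxA) hxI
    have hwit : ∃ x, x ∈ symmDiff Itil S ∧ x ∉ symmDiff Itil S' := by
      rcases hne with ⟨x, hx⟩ | ⟨x, hx⟩
      · refine ⟨x, ?_, ?_⟩
        · rw [Finset.mem_symmDiff]
          exact Or.inl ⟨hA'I x hx, hA'S x hx⟩
        · rw [Finset.mem_symmDiff]
          rintro (⟨_, hxS'⟩ | ⟨_, hxI⟩)
          · exact hxS' ((hmemS' x).mpr (Or.inr hx))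
          · exact hxI (hA'I x hx)
      · refine ⟨x, ?_, ?_⟩
        · rw [Finset.mem_symmDiff]
          exact Or.inr ⟨hB'S x hx, hB'I x hx⟩
        · rw [Finset.mem_symmDiff]
          rintro (⟨hxI, _⟩ | ⟨hxS', _⟩)
          · exact hB'I x hx hxI
          · rcases (hmemS' x).mp hxS' with ⟨_, hxB⟩ | hxA
            · exact hxB hx
            · exact hB'I x hx (hA'I x hxA)
    obtain ⟨x, hx1, hx2⟩ := hwit
    have hss : symmDiff Itil S' ⊂ symmDiff Itil S :=
      (Finset.ssubset_iff_of_subset hZsub).mpr ⟨x, hx1, hx2⟩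
    have := hSmin S' hS'O
    have := Finset.card_lt_card hss
    omega
  -- weight identities
  have hIA : ∑ x ∈ Itil ∩ S, w x + ∑ x ∈ A, w x = ∑ x ∈ Itil, w x := by
    rw [hA]; exact Finset.sum_inter_add_sum_sdiff Itil S w
  have hSB : ∑ x ∈ S ∩ Itil, w x + ∑ x ∈ B, w x = ∑ i ∈ S, w i := by
    rw [hB]; exact Finset.sum_inter_add_sum_sdiff S Itil w
  have hinter : ∑ x ∈ Itil ∩ S, w x = ∑ x ∈ S ∩ Itil, w x := by
    rw [Finset.inter_comm]
  -- set up the lists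
  have haslen : (A.toList.map w).length = A.card := by simp
  have hbslen : (B.toList.map w).length = B.card := by simp
  have hassum : (A.toList.map w).sum = ∑ x ∈ A, w x := Finset.sum_map_toList A w
  have hbssum : (B.toList.map w).sum = ∑ x ∈ B, w x := Finset.sum_map_toList B w
  have hael : ∀ x ∈ A.toList.map w, 1 ≤ x ∧ x ≤ wmax := by
    intro x hx
    rw [List.mem_map] at hx
    obtain ⟨a, _, rfl⟩ := hx
    exact hw a
  have hbel : ∀ x ∈ B.toList.map w, 1 ≤ x ∧ x ≤ wmax := by
    intro x hx
    rw [List.mem_map] at hx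
    obtain ⟨a, _, rfl⟩ := hx
    exact hw a
  have hAB : (A.toList.map w).sum ≤ (B.toList.map w).sum + (W - ∑ i ∈ S, w i) := by
    rw [hassum, hbssum]; omega
  have hBA : (B.toList.map w).sum + 1 ≤ (A.toList.map w).sum + wmax := by
    rw [hassum, hbssum]
    have := (hw ik).2
    omega
  have H1 : ∀ i, 1 ≤ i → i ≤ (A.toList.map w).length → ∀ j, j ≤ (B.toList.map w).length →
      ¬(preS (B.toList.map w) j ≤ preS (A.toList.map w) i ∧
        preS (A.toList.map w) i ≤ preS (B.toList.map w) j + (W - ∑ i ∈ S, w i)) := by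
    rintro i hi1 hi2 j hj ⟨hc1, hc2⟩
    obtain ⟨A', hA'sub, hA'sum, hA'ne⟩ := block_subset A w 0 i (by omega)
    obtain ⟨B', hB'sub, hB'sum, _⟩ := block_subset B w 0 j (by omega)
    have hz1 : preS (A.toList.map w) 0 = 0 := by simp [preS]
    have hz2 : preS (B.toList.map w) 0 = 0 := by simp [preS]
    refine noex A' hA'sub B' hB'sub (Or.inl (hA'ne (by omega) (by omega))) ⟨by omega, by omega⟩
  have H2 : ∀ i i' j j', i ≤ i' → i' ≤ (A.toList.map w).length → j ≤ j' →
      j' ≤ (B.toList.map w).length → (i ≠ i' ∨ j ≠ j') →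
      preS (A.toList.map w) i + preS (B.toList.map w) j' ≠
        preS (A.toList.map w) i' + preS (B.toList.map w) j := by
    rintro i i' j j' hii hi' hjj hj' hne heq
    obtain ⟨A', hA'sub, hA'sum, hA'ne⟩ := block_subset A w i i' hii
    obtain ⟨B', hB'sub, hB'sum, hB'ne⟩ := block_subset B w j j' hjj
    have hnon : A'.Nonempty ∨ B'.Nonempty := by
      rcases hne with h | h
      · exact Or.inl (hA'ne (by omega) (by omega))
      · exact Or.inr (hB'ne (by omega) (by omega))
    refine noex A' hA'sub B' hB'sub hnon ⟨by omega, by omega⟩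
  have hcore := knapsack_core wmax (W - ∑ i ∈ S, w i) hwmax (A.toList.map w) (B.toList.map w)
    hael hbel hAB hBA H1 H2
  omega
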